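/- Let D = (U, A) be a directed graph with |U| = n+1, and T = (U, A₀) a directed tree. Let M be the network matrix corresponding to (D, T), with rows indexed by A₀ and columns by A. For a set B of n columns with corresponding arc set A_B ⊆ A, the submatrix M_B is nonsingular if and only if (U, A_B) is a directed tree (i.e., the underlying undirected graph of A_B is a spanning tree of U). -/

import Mathlib

open SimpleGraph

variable {U : Type*}

/-- The underlying simple graph of a set of arcs. -/
def arcGraph [DecidableEq U] (A : Finset (U × U)) : SimpleGraph U where
  Adj u v := u ≠ v ∧ ((u, v) ∈ A ∨ (v, u) ∈ A)
  symm := ⟨fun _ _ h => ⟨h.1.symm, h.2.symm⟩⟩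
  loopless := ⟨fun _ h => h.1 rfl⟩

/-- `A` is a directed tree on `U`: its underlying undirected graph is a (spanning) tree,
and arcs are loopless and not doubled. -/
def IsDirTree [DecidableEq U] (A : Finset (U × U)) : Prop :=
  (arcGraph A).IsTree ∧ ∀ p ∈ A, p.1 ≠ p.2 ∧ Prod.swap p ∉ A

/-- The list of (oriented) arcs traversed by a walk. -/
def dartProds [DecidableEq U] {A : Finset (U × U)} {u v : U}
    (p : (arcGraph A).Walk u v) : List (U × U) :=
  p.darts.map SimpleGraph.Dart.toProd

/-- `M` is the network matrix of the digraph with arc set `Arcs` w.r.t. the directed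
tree with arc set `A₀`: the entry `(f, a)` is `1`/`-1`/`0` according as the tree arc `f`
is forward/backward/absent on the unique tree path between the endpoints of `a`. -/
def IsNetworkMatrix [DecidableEq U] (A₀ Arcs : Finset (U × U))
    (M : (U × U) → (U × U) → ℝ) : Prop :=
  ∀ f ∈ A₀, ∀ a ∈ Arcs, ∀ p : (arcGraph A₀).Walk a.1 a.2, p.IsPath →
    M f a = if f ∈ dartProds p then 1 else if Prod.swap f ∈ dartProds p then -1 else 0

set_option linter.unusedSectionVars false

namespace NetAux

variable [DecidableEq U]

/-- The incidence vector of an arc. -/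
def vArc (a : U × U) : U → ℝ := Pi.single a.2 1 - Pi.single a.1 1

lemma vArc_swap (a : U × U) : vArc a.swap = -vArc a := (neg_sub _ _).symm

lemma vArc_loop (u : U) : vArc (u, u) = 0 := sub_self _

lemma vArc_trans (u v w : U) : vArc (u, w) = vArc (u, v) + vArc (v, w) := by
  simp only [vArc]; abel

lemma darts_sum {S : Finset (U × U)} {u v : U} (p : (arcGraph S).Walk u v) :
    (p.darts.map (fun d => vArc d.toProd)).sum = vArc (u, v) := by
  induction p with
  | nil => simp [vArc_loop]
  | @cons a b c h q ih =>
    simp only [Walk.darts_cons, List.map_cons, List.sum_cons, ih]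
    simp only [vArc]; abel

lemma adj_toProd {S : Finset (U × U)} (d : (arcGraph S).Dart) :
    d.toProd.1 ≠ d.toProd.2 ∧ (d.toProd ∈ S ∨ d.toProd.swap ∈ S) := by
  have h := d.adj
  exact ⟨h.1, h.2⟩

lemma reachable_mem_span {S : Finset (U × U)} {u w : U}
    (h : (arcGraph S).Reachable u w) :
    vArc (u, w) ∈ Submodule.span ℝ (vArc '' ↑S) := by
  obtain ⟨p⟩ := h
  induction p with
  | nil => simp [vArc_loop]
  | @cons a b c h q ih =>
    rw [vArc_trans a b c]
    refine add_mem ?_ ih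
    rcases h.2 with hab | hba
    · exact Submodule.subset_span ⟨(a, b), hab, rfl⟩
    · have hm : vArc (b, a) ∈ Submodule.span ℝ (vArc '' ↑S) :=
        Submodule.subset_span ⟨(b, a), hba, rfl⟩
      rw [show vArc (a, b) = -vArc (b, a) from vArc_swap (b, a)]
      exact neg_mem hm

/-- The key bookkeeping lemma: summing signed incidence vectors over the arc set
equals summing incidence vectors of dart endpoints. -/
lemma sum_indicator_darts {S : Finset (U × U)}
    (hS : ∀ p ∈ S, p.1 ≠ p.2 ∧ Prod.swap p ∉ S)
    (D : Finset ((arcGraph S).Dart))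
    (hD : ∀ d ∈ D, ∀ d' ∈ D, d.edge = d'.edge → d = d') :
    ∑ b ∈ S, (if b ∈ D.image Dart.toProd then (1 : ℝ)
        else if Prod.swap b ∈ D.image Dart.toProd then -1 else 0) • vArc b
      = ∑ d ∈ D, vArc d.toProd := by
  have inner : ∀ d : (arcGraph S).Dart,
      ∑ b ∈ S, (if d.toProd = b then (1 : ℝ)
        else if d.toProd = Prod.swap b then -1 else 0) • vArc b = vArc d.toProd := by
    intro d
    obtain ⟨hne, hmem⟩ := adj_toProd d
    rcases hmem with hin | hsw
    · rw [Finset.sum_eq_single d.toProd]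
      · simp
      · intro b hb hbne
        rw [if_neg (fun h => hbne h.symm),
          if_neg (fun h => (hS b hb).2 (by rw [← h]; exact hin)), zero_smul]
      · intro h; exact absurd hin h
    · rw [Finset.sum_eq_single d.toProd.swap]
      · rw [if_neg (fun h => hne (congrArg Prod.fst h)),
          if_pos (Prod.swap_swap d.toProd).symm, vArc_swap]
        simp
      · intro b hb hbne
        rw [if_neg (fun h => (hS b hb).2 (by rw [← h]; exact hsw)),
          if_neg (fun h => hbne (by rw [h]; exact (Prod.swap_swap b).symm)), zero_smul]
      · intro h; exact absurd hsw h
  have coef : ∀ b ∈ S, (if b ∈ D.image Dart.toProd then (1 : ℝ)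
      else if Prod.swap b ∈ D.image Dart.toProd then -1 else 0)
      = ∑ d ∈ D, (if d.toProd = b then (1 : ℝ) else if d.toProd = Prod.swap b then -1 else 0) := by
    intro b hb
    by_cases hb1 : b ∈ D.image Dart.toProd
    · obtain ⟨d₀, hd₀D, hd₀⟩ := Finset.mem_image.mp hb1
      rw [if_pos hb1, Finset.sum_eq_single d₀, if_pos hd₀]
      · intro d hd hdne
        rw [if_neg (fun h => hdne (Dart.ext d d₀ (h.trans hd₀.symm))), if_neg]
        intro h
        have he : d.edge = d₀.edge := by
          simp only [Dart.edge, h, hd₀, Sym2.mk_prod_swap_eq]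
          exact Sym2.eq_swap
        exact hdne (hD d hd d₀ hd₀D he)
      · intro h; exact absurd hd₀D h
    · by_cases hb2 : Prod.swap b ∈ D.image Dart.toProd
      · obtain ⟨d₀, hd₀D, hd₀⟩ := Finset.mem_image.mp hb2
        rw [if_neg hb1, if_pos hb2, Finset.sum_eq_single d₀,
          if_neg (fun h => hb1 (Finset.mem_image.mpr ⟨d₀, hd₀D, h⟩)), if_pos hd₀]
        · intro d hd hdne
          rw [if_neg (fun h => hb1 (Finset.mem_image.mpr ⟨d, hd, h⟩)),
            if_neg (fun h => hdne (Dart.ext d d₀ (h.trans hd₀.symm)))]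
        · intro h; exact absurd hd₀D h
      · rw [if_neg hb1, if_neg hb2, Finset.sum_eq_zero]
        intro d hd
        rw [if_neg (fun h => hb1 (Finset.mem_image.mpr ⟨d, hd, h⟩)),
          if_neg (fun h => hb2 (Finset.mem_image.mpr ⟨d, hd, h⟩))]
  calc ∑ b ∈ S, (if b ∈ D.image Dart.toProd then (1 : ℝ)
        else if Prod.swap b ∈ D.image Dart.toProd then -1 else 0) • vArc b
      = ∑ b ∈ S, ∑ d ∈ D, (if d.toProd = b then (1 : ℝ)
          else if d.toProd = Prod.swap b then -1 else 0) • vArc b := by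
        refine Finset.sum_congr rfl fun b hb => ?_
        rw [coef b hb, Finset.sum_smul]
    _ = ∑ d ∈ D, ∑ b ∈ S, (if d.toProd = b then (1 : ℝ)
          else if d.toProd = Prod.swap b then -1 else 0) • vArc b := Finset.sum_comm
    _ = ∑ d ∈ D, vArc d.toProd := Finset.sum_congr rfl fun d _ => inner d

variable [Fintype U]

/-- The "sum of coordinates" functional. -/
def phi : (U → ℝ) →ₗ[ℝ] ℝ where
  toFun x := ∑ u, x u
  map_add' x y := by simp [Finset.sum_add_distrib]
  map_smul' c x := by simp [Finset.mul_sum]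

/-- The "sum of coordinates over a subset" functional. -/
def psi (R : Finset U) : (U → ℝ) →ₗ[ℝ] ℝ where
  toFun x := ∑ t ∈ R, x t
  map_add' x y := by simp [Finset.sum_add_distrib]
  map_smul' c x := by simp [Finset.mul_sum]

lemma vArc_mem_ker (a : U × U) : vArc a ∈ LinearMap.ker phi := by
  simp [phi, vArc, LinearMap.mem_ker, Finset.sum_sub_distrib]

lemma finrank_ker (n : ℕ) (hU : Fintype.card U = n + 1) :
    Module.finrank ℝ (LinearMap.ker (phi (U := U))) = n := by
  have hne : Nonempty U := Fintype.card_pos_iff.mp (by omega)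
  obtain ⟨u⟩ := hne
  have h1 : Function.Surjective (phi (U := U)) := fun r => ⟨Pi.single u r, by simp [phi]⟩
  have h2 := LinearMap.finrank_range_add_finrank_ker (phi (U := U))
  rw [LinearMap.range_eq_top.mpr h1, finrank_top, Module.finrank_self, Module.finrank_pi, hU] at h2
  omega

lemma ker_le_span' {S : Finset (U × U)} (u₀ : U) (hconn : (arcGraph S).Preconnected) :
    LinearMap.ker (phi (U := U)) ≤ Submodule.span ℝ (vArc '' ↑S) := by
  intro x hx
  have hx0 : ∑ u, x u = 0 := hx
  have hrep : x = ∑ u, x u • vArc (u₀, u) := by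
    funext t
    simp only [Finset.sum_apply, Pi.smul_apply, vArc, Pi.sub_apply, smul_eq_mul, mul_sub]
    rw [Finset.sum_sub_distrib]
    have h1 : ∑ u, x u * (Pi.single u (1 : ℝ) : U → ℝ) t = x t := by
      simp [Pi.single_apply, mul_ite]
    have h2 : ∑ u, x u * (Pi.single u₀ (1 : ℝ) : U → ℝ) t = 0 := by
      rw [← Finset.sum_mul, hx0, zero_mul]
    rw [h1, h2, sub_zero]
  rw [hrep]
  exact Submodule.sum_mem _ fun u _ =>
    Submodule.smul_mem _ _ (reachable_mem_span (hconn u₀ u))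

lemma range_eq_image (S : Finset (U × U)) :
    Set.range (fun b : S => vArc (b : U × U)) = vArc '' ↑S := by
  ext y
  constructor
  · rintro ⟨b, rfl⟩; exact ⟨↑b, b.2, rfl⟩
  · rintro ⟨a, ha, rfl⟩; exact ⟨⟨a, ha⟩, rfl⟩

lemma li_of_connected {S : Finset (U × U)} (n : ℕ) (hU : Fintype.card U = n + 1)
    (hcard : S.card = n) (hconn : (arcGraph S).Preconnected) :
    LinearIndependent ℝ (fun b : S => vArc (b : U × U)) := by
  have hne : Nonempty U := Fintype.card_pos_iff.mp (by omega)
  obtain ⟨u₀⟩ := hne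
  have hspan : Submodule.span ℝ (vArc '' ↑S) = LinearMap.ker (phi (U := U)) := by
    apply le_antisymm
    · rw [Submodule.span_le]; rintro y ⟨a, _, rfl⟩; exact vArc_mem_ker a
    · exact ker_le_span' u₀ hconn
  rw [linearIndependent_iff_card_eq_finrank_span, Set.finrank, range_eq_image, hspan,
    finrank_ker n hU, Fintype.card_coe, hcard]

lemma span_eq_ker_of_li {S : Finset (U × U)} (n : ℕ) (hU : Fintype.card U = n + 1)
    (hcard : S.card = n)
    (hli : LinearIndependent ℝ (fun b : S => vArc (b : U × U))) :
    Submodule.span ℝ (vArc '' ↑S) = LinearMap.ker (phi (U := U)) := by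
  apply Submodule.eq_of_le_of_finrank_le
  · rw [Submodule.span_le]; rintro y ⟨a, _, rfl⟩; exact vArc_mem_ker a
  · rw [finrank_ker n hU]
    have h := linearIndependent_iff_card_eq_finrank_span.mp hli
    rw [Fintype.card_coe, hcard, Set.finrank, range_eq_image] at h
    omega

lemma connected_of_li {S : Finset (U × U)} (n : ℕ) (hU : Fintype.card U = n + 1)
    (hcard : S.card = n)
    (hli : LinearIndependent ℝ (fun b : S => vArc (b : U × U))) :
    (arcGraph S).Connected := by
  classical
  rw [connected_iff]
  refine ⟨?_, Fintype.card_pos_iff.mp (by omega)⟩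
  intro u w
  by_contra hr
  have hspan := span_eq_ker_of_li n hU hcard hli
  set R : Finset U := Finset.univ.filter (fun t => (arcGraph S).Reachable u t) with hRdef
  have hmemR : ∀ t, t ∈ R ↔ (arcGraph S).Reachable u t := by
    intro t; simp [hRdef]
  have hkill : Submodule.span ℝ (vArc '' ↑S) ≤ LinearMap.ker (psi R) := by
    rw [Submodule.span_le]
    rintro y ⟨b, hbS, rfl⟩
    have hiff : (b.1 ∈ R) ↔ (b.2 ∈ R) := by
      by_cases hb : b.1 = b.2
      · rw [hb]
      · have hadj : (arcGraph S).Adj b.1 b.2 := ⟨hb, Or.inl hbS⟩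
        rw [hmemR, hmemR]
        exact ⟨fun h => h.trans hadj.reachable, fun h => h.trans hadj.symm.reachable⟩
    have hz : psi R (vArc b) = 0 := by
      simp only [psi, LinearMap.coe_mk, AddHom.coe_mk, vArc, Pi.sub_apply]
      rw [Finset.sum_sub_distrib]
      have e1 : ∑ t ∈ R, (Pi.single b.2 (1 : ℝ) : U → ℝ) t
          = if b.2 ∈ R then (1 : ℝ) else 0 := by
        simp [Pi.single_apply, Finset.sum_ite_eq']
      have e2 : ∑ t ∈ R, (Pi.single b.1 (1 : ℝ) : U → ℝ) t
          = if b.1 ∈ R then (1 : ℝ) else 0 := by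
        simp [Pi.single_apply, Finset.sum_ite_eq']
      rw [e1, e2]
      by_cases h1 : b.1 ∈ R
      · rw [if_pos h1, if_pos (hiff.mp h1), sub_self]
      · rw [if_neg h1, if_neg (fun h2 => h1 (hiff.mpr h2)), sub_self]
    exact hz
  have hm : vArc (w, u) ∈ Submodule.span ℝ (vArc '' ↑S) := by
    rw [hspan]; exact vArc_mem_ker _
  have h0 : psi R (vArc (w, u)) = 0 := hkill hm
  have hu : u ∈ R := (hmemR u).mpr (Reachable.refl u)
  have hw : w ∉ R := fun h => hr ((hmemR w).mp h)
  rw [show psi R (vArc (w, u)) = (1 : ℝ) from ?_] at h0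
  · exact one_ne_zero h0
  · simp only [psi, LinearMap.coe_mk, AddHom.coe_mk, vArc, Pi.sub_apply]
    rw [Finset.sum_sub_distrib]
    have e1 : ∑ t ∈ R, (Pi.single u (1 : ℝ) : U → ℝ) t = (1 : ℝ) := by
      simp [Pi.single_apply, Finset.sum_ite_eq', hu]
    have e2 : ∑ t ∈ R, (Pi.single w (1 : ℝ) : U → ℝ) t = 0 := by
      simp [Pi.single_apply, Finset.sum_ite_eq', hw]
    rw [e1, e2, sub_zero]

lemma acyclic_of_li {S : Finset (U × U)}
    (hS : ∀ p ∈ S, p.1 ≠ p.2 ∧ Prod.swap p ∉ S)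
    (hli : LinearIndependent ℝ (fun b : S => vArc (b : U × U))) :
    (arcGraph S).IsAcyclic := by
  classical
  intro v c hc
  have hnodupE : (c.darts.map Dart.edge).Nodup := hc.isCircuit.isTrail.edges_nodup
  have hdartsN : c.darts.Nodup := hnodupE.of_map _
  set D := c.darts.toFinset with hDdef
  have hinj : ∀ d ∈ D, ∀ d' ∈ D, d.edge = d'.edge → d = d' := fun d hd d' hd' he =>
    List.inj_on_of_nodup_map hnodupE (List.mem_toFinset.mp hd) (List.mem_toFinset.mp hd') he
  have hsum := sum_indicator_darts hS D hinj
  have hrhs : ∑ d ∈ D, vArc d.toProd = 0 := by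
    rw [hDdef, List.sum_toFinset (fun d => vArc d.toProd) hdartsN, darts_sum c, vArc_loop]
  set g : U × U → ℝ := fun b => if b ∈ D.image Dart.toProd then 1
      else if Prod.swap b ∈ D.image Dart.toProd then -1 else 0 with hg
  have hzero : ∑ b : S, g (b : U × U) • vArc (b : U × U) = 0 := by
    rw [Finset.sum_coe_sort S (fun b => g b • vArc b), hg]
    rw [hsum, hrhs]
  have hall := Fintype.linearIndependent_iff.mp hli (fun b => g (b : U × U)) hzero
  have hne : c.darts ≠ [] := by
    have h3 := hc.three_le_length
    have hl := Walk.length_darts c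
    intro h
    rw [h] at hl
    simp at hl
    omega
  obtain ⟨d₀, hd₀⟩ := List.exists_mem_of_ne_nil c.darts hne
  have hd₀D : d₀ ∈ D := List.mem_toFinset.mpr hd₀
  obtain ⟨hne0, hmem⟩ := adj_toProd d₀
  rcases hmem with hin | hsw
  · have h1 : g d₀.toProd = 1 := by
      rw [hg]
      simp only
      rw [if_pos (Finset.mem_image.mpr ⟨d₀, hd₀D, rfl⟩)]
    have h2 := hall ⟨d₀.toProd, hin⟩
    simp only at h2
    rw [h1] at h2
    exact one_ne_zero h2
  · have hnotim : d₀.toProd.swap ∉ D.image Dart.toProd := by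
      intro hmem'
      obtain ⟨d', hd', he⟩ := Finset.mem_image.mp hmem'
      have hdd : d' = d₀ := hinj d' hd' d₀ hd₀D
        (by simp only [Dart.edge, he, Sym2.mk_prod_swap_eq]; exact Sym2.eq_swap)
      rw [hdd] at he
      exact hne0 (congrArg Prod.fst he)
    have h1 : g d₀.toProd.swap = -1 := by
      rw [hg]
      simp only
      rw [if_neg hnotim, if_pos]
      rw [Prod.swap_swap]
      exact Finset.mem_image.mpr ⟨d₀, hd₀D, rfl⟩
    have h2 := hall ⟨d₀.toProd.swap, hsw⟩
    simp only at h2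
    rw [h1] at h2
    norm_num at h2

lemma col_eq {A₀ Arcs : Finset (U × U)}
    (hA₀ : ∀ p ∈ A₀, p.1 ≠ p.2 ∧ Prod.swap p ∉ A₀)
    {M : (U × U) → (U × U) → ℝ} (hM : IsNetworkMatrix A₀ Arcs M)
    {a : U × U} (ha : a ∈ Arcs)
    (p : (arcGraph A₀).Walk a.1 a.2) (hp : p.IsPath) :
    ∑ f ∈ A₀, M f a • vArc f = vArc a := by
  classical
  have hnodupE : (p.darts.map Dart.edge).Nodup := hp.isTrail.edges_nodup
  have hdartsN : p.darts.Nodup := hnodupE.of_map _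
  set D := p.darts.toFinset with hDdef
  have hinj : ∀ d ∈ D, ∀ d' ∈ D, d.edge = d'.edge → d = d' := fun d hd d' hd' he =>
    List.inj_on_of_nodup_map hnodupE (List.mem_toFinset.mp hd) (List.mem_toFinset.mp hd') he
  have hrw : ∀ f ∈ A₀, M f a = (if f ∈ D.image Dart.toProd then (1 : ℝ)
      else if Prod.swap f ∈ D.image Dart.toProd then -1 else 0) := by
    intro f hf
    rw [hM f hf a ha p hp]
    have h1 : (f ∈ dartProds p) ↔ f ∈ D.image Dart.toProd := by
      simp [dartProds, hDdef, eq_comm]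
    have h2 : (Prod.swap f ∈ dartProds p) ↔ Prod.swap f ∈ D.image Dart.toProd := by
      simp [dartProds, hDdef, eq_comm]
    rw [if_congr h1 rfl (if_congr h2 rfl rfl)]
  rw [Finset.sum_congr rfl (fun f hf => by rw [hrw f hf])]
  rw [sum_indicator_darts hA₀ D hinj]
  rw [hDdef, List.sum_toFinset (fun d => vArc d.toProd) hdartsN, darts_sum p]

/-- The linear map sending a coefficient vector on the tree arcs to the corresponding
combination of incidence vectors. -/
def colMap (A₀ : Finset (U × U)) : (A₀ → ℝ) →ₗ[ℝ] (U → ℝ) where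
  toFun c := ∑ f : A₀, c f • vArc (f : U × U)
  map_add' x y := by
    simp [add_smul, Finset.sum_add_distrib]
  map_smul' r x := by
    simp [Finset.smul_sum, smul_smul]

end NetAux

open NetAux in
/-- Spanning-tree characterization of cardinal bases of a network matrix: for a set `B`
of `n` columns (arcs of `D`), the corresponding submatrix has full rank (equivalently, its
columns are linearly independent) iff `(U, A_B)` is a directed tree, i.e. the underlying
undirected graph of `B` is a spanning tree of `U`. -/
theorem network_basis_iff_spanning_tree [Fintype U] [DecidableEq U] (n : ℕ)
    (hU : Fintype.card U = n + 1)
    (A₀ Arcs : Finset (U × U)) (hA₀ : IsDirTree A₀) (hA₀card : A₀.card = n)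
    (M : (U × U) → (U × U) → ℝ) (hM : IsNetworkMatrix A₀ Arcs M)
    (B : Finset (U × U)) (hBsub : B ⊆ Arcs) (hBcard : B.card = n) :
    LinearIndependent ℝ (fun b : B => fun f : A₀ => M (f : U × U) (b : U × U)) ↔
      IsDirTree B := by
  classical
  have hliA₀ : LinearIndependent ℝ (fun f : A₀ => vArc (f : U × U)) :=
    li_of_connected n hU hA₀card hA₀.1.isConnected.preconnected
  have hTker : LinearMap.ker (colMap A₀) = ⊥ := by
    rw [LinearMap.ker_eq_bot']
    intro c hc
    have h0 : ∑ f : A₀, c f • vArc (f : U × U) = 0 := hc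
    funext f
    exact Fintype.linearIndependent_iff.mp hliA₀ c h0 f
  have hcols : ∀ b : B, colMap A₀ (fun f : A₀ => M (f : U × U) (b : U × U))
      = vArc (b : U × U) := by
    intro b
    have hb : (b : U × U) ∈ Arcs := hBsub b.2
    obtain ⟨w⟩ := hA₀.1.isConnected.preconnected (b : U × U).1 (b : U × U).2
    have hcol := col_eq hA₀.2 hM hb w.toPath.1 w.toPath.2
    show ∑ f : A₀, M (f : U × U) (b : U × U) • vArc (f : U × U) = _
    rw [Finset.sum_coe_sort A₀ (fun f => M f (b : U × U) • vArc f)]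
    exact hcol
  have hcomp : (colMap A₀ ∘ fun b : B => fun f : A₀ => M (f : U × U) (b : U × U))
      = fun b : B => vArc (b : U × U) := funext fun b => hcols b
  constructor
  · intro hli
    have hv : LinearIndependent ℝ (fun b : B => vArc (b : U × U)) := by
      have h2 := hli.map' (colMap A₀) hTker
      rwa [hcomp] at h2
    have hnl : ∀ p ∈ B, p.1 ≠ p.2 := by
      intro p hp h
      refine hv.ne_zero ⟨p, hp⟩ ?_
      show vArc p = 0
      simp only [vArc, h, sub_self]
    have hnd : ∀ p ∈ B, Prod.swap p ∉ B := by
      intro p hp hsw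
      have hps : p ≠ Prod.swap p := by
        intro h
        exact (hnl p hp) (congrArg Prod.fst h)
      have hzero : ∑ b : B, (if (b : U × U) = p then (1 : ℝ)
          else if (b : U × U) = Prod.swap p then 1 else 0) • vArc (b : U × U) = 0 := by
        rw [Finset.sum_coe_sort B
          (fun b => (if b = p then (1 : ℝ) else if b = Prod.swap p then 1 else 0) • vArc b)]
        have hsub : ({p, Prod.swap p} : Finset (U × U)) ⊆ B := by
          intro x hx
          rcases Finset.mem_insert.mp hx with h | h
          · rw [h]; exact hp
          · rw [Finset.mem_singleton.mp h]; exact hsw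
        rw [← Finset.sum_subset hsub]
        · rw [Finset.sum_pair hps]
          rw [if_pos rfl, if_neg (fun h => hps h.symm), if_pos rfl,
            show vArc (Prod.swap p) = -vArc p from vArc_swap p]
          simp
        · intro x _ hxpair
          rw [if_neg (fun h => hxpair (by rw [h]; exact Finset.mem_insert_self _ _)),
            if_neg (fun h => hxpair (by
              rw [h]; exact Finset.mem_insert.mpr (Or.inr (Finset.mem_singleton_self _)))),
            zero_smul]
      have hall := Fintype.linearIndependent_iff.mp hv _ hzero
      have hcontra := hall ⟨p, hp⟩
      simp at hcontra
    have hconn := connected_of_li n hU hBcard hv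
    have hacyc := acyclic_of_li (fun p hp => ⟨hnl p hp, hnd p hp⟩) hv
    exact ⟨⟨hconn, hacyc⟩, fun p hp => ⟨hnl p hp, hnd p hp⟩⟩
  · intro hB
    have hv := li_of_connected n hU hBcard hB.1.isConnected.preconnected
    apply LinearIndependent.of_comp (colMap A₀)
    rw [hcomp]
    exact hv
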